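/- Abel's identity: For integers t ≥ 1 and nonzero reals a, b, Σ_{j=0}^{t} C(t, j)·(a + j)^{j-1}·(b + t - j)^{t-j-1} = (1/a + 1/b)·(t + a + b)^{t-1}. -/

import Mathlib

open Finset Polynomial

noncomputable def abelP : ℕ → Polynomial ℝ
  | 0 => 1
  | (n+1) => X * (X + C ((n : ℝ) + 1)) ^ n

lemma abelP_eval_zero (n : ℕ) : (abelP n).eval 0 = if n = 0 then 1 else 0 := by
  cases n with
  | zero => simp [abelP]
  | succ n => simp [abelP]

lemma abelP_eval_succ (n : ℕ) (x : ℝ) :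
    (abelP (n+1)).eval x = x * (x + (n + 1)) ^ n := by
  simp [abelP]

lemma abelP_deriv (n : ℕ) :
    derivative (abelP (n+1)) = ((n : ℝ) + 1) • (abelP n).comp (X + 1) := by
  cases n with
  | zero => simp [abelP]
  | succ n =>
    simp only [abelP, derivative_mul, derivative_pow, derivative_X, derivative_add,
      derivative_C, mul_comp, add_comp, X_comp, C_comp, pow_comp, one_comp,
      smul_eq_C_mul]
    push_cast
    simp only [C_add, C_1]
    ring

lemma abelP_add (n : ℕ) (y : ℝ) :
    (abelP n).comp (X + C y) =
      ∑ k ∈ range (n+1),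
        (n.choose k : ℝ) • ((abelP (n-k)).eval y • abelP k) := by
  induction n generalizing y with
  | zero => simp [abelP]
  | succ n ih =>
    set L : Polynomial ℝ := (abelP (n+1)).comp (X + C y) with hL
    set R : Polynomial ℝ := ∑ k ∈ range (n+2),
        ((n+1).choose k : ℝ) • ((abelP (n+1-k)).eval y • abelP k) with hR
    have hdL : derivative L = ((n : ℝ) + 1) • (abelP n).comp (X + C y + 1) := by
      rw [hL, derivative_comp, abelP_deriv]
      simp only [smul_comp, Polynomial.comp_assoc, derivative_add, derivative_X,
        derivative_C, add_zero, mul_smul_comm, mul_one]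
      congr 2
      simp [add_comp]
    have hdR : derivative R = ((n : ℝ) + 1) • (abelP n).comp (X + C y + 1) := by
      rw [hR, derivative_sum]
      have : ∀ k ∈ range (n+2),
          derivative (((n+1).choose k : ℝ) • ((abelP (n+1-k)).eval y • abelP k)) =
            (((n+1).choose k : ℝ) * (abelP (n+1-k)).eval y) • derivative (abelP k) := by
        intro k _
        simp [smul_smul]
      rw [Finset.sum_congr rfl this]
      rw [Finset.sum_range_succ'] -- split off k = 0
      have h0 : abelP 0 = 1 := rfl
      simp only [h0, derivative_one, smul_zero, add_zero]
      have : ∀ k ∈ range (n+1),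
          (((n+1).choose (k+1) : ℝ) * (abelP (n+1-(k+1))).eval y) • derivative (abelP (k+1)) =
            ((n : ℝ) + 1) •
              ((n.choose k : ℝ) • ((abelP (n-k)).eval y • (abelP k).comp (X + 1))) := by
        intro k hk
        rw [abelP_deriv]
        have hch : ((n+1).choose (k+1) : ℝ) * ((k : ℝ) + 1) = ((n : ℝ) + 1) * (n.choose k) := by
          have h2 := congrArg (Nat.cast : ℕ → ℝ) (Nat.add_one_mul_choose_eq n k)
          push_cast at h2
          linarith [h2]
        have hsub : n + 1 - (k + 1) = n - k := by omega
        rw [hsub]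
        rw [smul_smul, smul_smul, smul_smul]
        congr 1
        linear_combination (abelP (n - k)).eval y * hch
      rw [Finset.sum_congr rfl this, ← Finset.smul_sum]
      congr 1
      have h3 := congrArg (fun p => p.comp (X + 1)) (ih y)
      simp only [Polynomial.sum_comp, smul_comp] at h3
      rw [← h3, Polynomial.comp_assoc]
      congr 1
      simp [add_comp]
      ring
    have hderiv : derivative (L - R) = 0 := by
      rw [derivative_sub, hdL, hdR, sub_self]
    have hconst := Polynomial.eq_C_of_derivative_eq_zero hderiv
    have hev : (L - R).coeff 0 = 0 := by
      rw [Polynomial.coeff_zero_eq_eval_zero]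
      have hevL : L.eval 0 = (abelP (n+1)).eval y := by
        rw [hL, eval_comp]; simp
      have hevR : R.eval 0 = (abelP (n+1)).eval y := by
        rw [hR, eval_finset_sum]
        rw [Finset.sum_eq_single 0]
        · simp [abelP]
        · intro k _ hk
          simp [abelP_eval_zero, hk]
        · simp
      simp [hevL, hevR]
    have : L - R = 0 := by rw [hconst, hev, map_zero]
    exact sub_eq_zero.mp this

lemma abel_sum (t : ℕ) (a b : ℝ) :
    (abelP t).eval (a + b) =
      ∑ k ∈ range (t+1), (t.choose k : ℝ) * ((abelP (t-k)).eval b * (abelP k).eval a) := by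
  have h := congrArg (eval a) (abelP_add t b)
  simpa [eval_comp, eval_finset_sum] using h

theorem stmt10 (t : ℕ) (ht : 1 ≤ t) (a b : ℝ) (ha : a ≠ 0) (hb : b ≠ 0) :
    ∑ j ∈ Finset.range (t + 1),
        (t.choose j : ℝ) * (a + j) ^ ((j : ℤ) - 1) * (b + t - j) ^ ((t : ℤ) - j - 1) =
      (1 / a + 1 / b) * (t + a + b) ^ ((t : ℤ) - 1) := by
  obtain ⟨s, rfl⟩ : ∃ s, t = s + 1 := ⟨t - 1, by omega⟩
  apply mul_left_cancel₀ (mul_ne_zero ha hb)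
  rw [Finset.mul_sum]
  have hRHS : a * b * ((1/a + 1/b) * (((s+1:ℕ):ℝ) + a + b) ^ (((s+1:ℕ) : ℤ) - 1))
      = (abelP (s+1)).eval (a + b) := by
    have he : (((s+1:ℕ):ℤ) - 1) = ((s:ℕ) : ℤ) := by push_cast; ring
    rw [he, zpow_natCast, abelP_eval_succ]
    push_cast
    field_simp
    ring
  rw [hRHS, abel_sum (s+1) a b]
  apply Finset.sum_congr rfl
  intro j hj
  simp only [Finset.mem_range] at hj
  rcases Nat.eq_zero_or_pos j with rfl | hj1
  · have h0 : abelP 0 = 1 := rfl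
    have e1 : ((0:ℕ):ℤ) - 1 = -1 := by norm_num
    have e2 : (((s+1:ℕ)):ℤ) - ((0:ℕ):ℤ) - 1 = ((s:ℕ):ℤ) := by push_cast; ring
    rw [e1, e2, zpow_natCast, h0, Nat.sub_zero, abelP_eval_succ]
    simp only [Nat.choose_zero_right, Nat.cast_one, one_mul, eval_one, mul_one,
      Nat.cast_zero, sub_zero, zpow_neg_one]
    field_simp
    ring_nf; rw [mul_inv_cancel₀ ha]; push_cast; ring
  · by_cases hj2 : j = s + 1
    · subst hj2
      have e1 : (((s+1:ℕ)):ℤ) - 1 = ((s:ℕ):ℤ) := by push_cast; ring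
      have e2 : (((s+1:ℕ)):ℤ) - (((s+1:ℕ)):ℤ) - 1 = -1 := by push_cast; ring
      have h0 : abelP ((s+1) - (s+1)) = 1 := by simp [abelP]
      rw [e1, e2, zpow_natCast, h0, abelP_eval_succ]
      have e3 : b + ((s+1:ℕ):ℝ) - ((s+1:ℕ):ℝ) = b := by ring
      rw [e3]
      simp only [Nat.choose_self, Nat.cast_one, one_mul, eval_one, zpow_neg_one]
      field_simp
      push_cast; ring
    · obtain ⟨i, rfl⟩ : ∃ i, j = i + 1 := ⟨j - 1, by omega⟩
      obtain ⟨m, hm⟩ : ∃ m, s = i + m + 1 := ⟨s - i - 1, by omega⟩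
      have e1 : (((i+1:ℕ)):ℤ) - 1 = ((i:ℕ):ℤ) := by push_cast; ring
      have e2 : (((s+1:ℕ)):ℤ) - (((i+1:ℕ)):ℤ) - 1 = ((m:ℕ):ℤ) := by
        subst hm; push_cast; ring
      have e3 : b + ((s+1:ℕ):ℝ) - ((i+1:ℕ):ℝ) = b + ((m+1:ℕ):ℝ) := by
        subst hm; push_cast; ring
      have e4 : (s+1) - (i+1) = m + 1 := by omega
      rw [e1, e2, e3, e4, zpow_natCast, zpow_natCast, abelP_eval_succ, abelP_eval_succ]
      push_cast
      ring
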